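/- arXiv:2604.04087 — 2 statements merged into one kernel-verified Lean document; each statement's English description precedes it below -/
import Mathlib

section
/- For any two permutations π, σ of {1,…,V}, the Kendall tau distance d_K(π,σ) (the number of pairs (i,j) with i<j on which π and σ disagree in relative order) and Spearman's footrule d_F(π,σ) = Σ_{i=1}^V |π(i) - σ(i)| satisfy d_K(π,σ) ≤ d_F(π,σ) ≤ 2·d_K(π,σ). -/
open Finset

/-- Spearman's footrule distance. -/
def footrule {V : ℕ} (π σ : Equiv.Perm (Fin V)) : ℕ :=
  ∑ i : Fin V, (((π i : ℕ) : ℤ) - ((σ i : ℕ) : ℤ)).natAbs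

/-- Kendall tau distance: number of discordant pairs. -/
def kendall {V : ℕ} (π σ : Equiv.Perm (Fin V)) : ℕ :=
  (Finset.univ.filter fun p : Fin V × Fin V =>
    p.1 < p.2 ∧ ¬ ((π p.1 < π p.2) ↔ (σ p.1 < σ p.2))).card

open Equiv

theorem Equiv.Perm.inv_apply_self {α : Type*} (f : Perm α) (x : α) : f⁻¹ (f x) = x :=
  Equiv.Perm.inv_eq_iff_eq.mpr rfl

theorem Equiv.Perm.apply_inv_self {α : Type*} (f : Perm α) (x : α) : f (f⁻¹ x) = x :=
  (Equiv.eq_symm_apply f).mp rfl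

lemma fin_val_ne {V : ℕ} (f : Equiv.Perm (Fin V)) {x y : Fin V} (h : x ≠ y) :
    (f x : ℕ) ≠ (f y : ℕ) := by
  simp only [ne_eq, Fin.val_eq_val, EmbeddingLike.apply_eq_iff_eq]
  exact h

lemma footrule_reduce {V : ℕ} (π σ : Equiv.Perm (Fin V)) :
    footrule π σ = footrule (π * σ⁻¹) 1 := by
  unfold footrule
  rw [← Equiv.sum_comp σ (fun x => (((((π * σ⁻¹) x : Fin V) : ℕ) : ℤ) - (((1 : Perm (Fin V)) x : ℕ) : ℤ)).natAbs)]
  simp [Equiv.Perm.mul_apply]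

lemma kendall_reduce {V : ℕ} (π σ : Equiv.Perm (Fin V)) :
    kendall π σ = kendall (π * σ⁻¹) 1 := by
  unfold kendall
  apply Finset.card_bij'
    (fun p _ => if σ p.1 < σ p.2 then (σ p.1, σ p.2) else (σ p.2, σ p.1))
    (fun q _ => if σ⁻¹ q.1 < σ⁻¹ q.2 then (σ⁻¹ q.1, σ⁻¹ q.2) else (σ⁻¹ q.2, σ⁻¹ q.1))
  · intro p hp
    simp only [mem_filter, mem_univ, true_and] at hp ⊢
    obtain ⟨h12, hd⟩ := hp
    have hπ : (π p.1 : ℕ) ≠ (π p.2 : ℕ) := fin_val_ne π h12.ne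
    have hσ : (σ p.1 : ℕ) ≠ (σ p.2 : ℕ) := fin_val_ne σ h12.ne
    simp only [Fin.lt_def] at h12 hd
    split_ifs with h <;>
      simp only [Perm.mul_apply, Perm.one_apply, Perm.inv_apply_self, Fin.lt_def] at h ⊢ <;>
      omega
  · intro q hq
    simp only [mem_filter, mem_univ, true_and] at hq ⊢
    obtain ⟨h12, hd⟩ := hq
    have hπ : (π (σ⁻¹ q.1) : ℕ) ≠ (π (σ⁻¹ q.2) : ℕ) := fin_val_ne π (fun h => absurd (σ⁻¹.injective h) h12.ne)
    have hσ : ((σ⁻¹ q.1 : Fin V) : ℕ) ≠ ((σ⁻¹ q.2 : Fin V) : ℕ) := fin_val_ne σ⁻¹ h12.ne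
    simp only [Perm.mul_apply, Perm.one_apply, Fin.lt_def] at h12 hd
    split_ifs with h <;>
      simp only [Perm.apply_inv_self, Fin.lt_def] at h ⊢ <;>
      omega
  · intro p hp
    simp only [mem_filter, mem_univ, true_and] at hp
    obtain ⟨h12, -⟩ := hp
    split_ifs <;> simp_all [Perm.inv_apply_self, Prod.ext_iff] <;>
      exact absurd h12 (lt_asymm ‹_›)
  · intro q hq
    simp only [mem_filter, mem_univ, true_and] at hq
    obtain ⟨h12, -⟩ := hq
    split_ifs <;> simp_all [Perm.apply_inv_self, Prod.ext_iff] <;>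
      exact absurd h12 (lt_asymm ‹_›)

lemma card_filter_lt_fin {V : ℕ} (c : Fin V) :
    (univ.filter fun v : Fin V => v < c).card = (c : ℕ) := by
  have : (univ.filter fun v : Fin V => v < c) = Finset.Iio c := by
    ext v; simp
  rw [this, Fin.card_Iio]

lemma val_eq_card {V : ℕ} (τ : Equiv.Perm (Fin V)) (x : Fin V) :
    ((τ x : Fin V) : ℕ) = (univ.filter fun y => τ y < τ x).card := by
  rw [← card_filter_lt_fin (τ x)]
  apply Finset.card_bij (fun v _ => τ⁻¹ v)
  · intro v hv; simp only [mem_filter, mem_univ, true_and] at hv ⊢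
    simpa [Perm.apply_inv_self] using hv
  · intro a _ b _ h; exact τ⁻¹.injective h
  · intro y hy; simp only [mem_filter, mem_univ, true_and] at hy
    exact ⟨τ y, by simpa using hy, by simp⟩

lemma kendall_one {V : ℕ} (τ : Equiv.Perm (Fin V)) :
    kendall τ 1 = (univ.filter fun p : Fin V × Fin V => p.1 < p.2 ∧ τ p.2 < τ p.1).card := by
  unfold kendall
  congr 1
  refine Finset.filter_congr fun p _ => ?_
  rcases eq_or_ne p.1 p.2 with h | h
  · simp [h]
  · have hne : (τ p.1 : ℕ) ≠ (τ p.2 : ℕ) := fin_val_ne τ h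
    have h' : (p.1 : ℕ) ≠ (p.2 : ℕ) := by simpa [Fin.val_eq_val] using h
    simp only [Perm.one_apply, Fin.lt_def]
    constructor
    · rintro ⟨ha, hb⟩; exact ⟨ha, by omega⟩
    · rintro ⟨ha, hb⟩; exact ⟨ha, by omega⟩

-- kendall as double sums
lemma kendall_rows {V : ℕ} (τ : Equiv.Perm (Fin V)) :
    kendall τ 1 = ∑ x : Fin V, (univ.filter fun y => x < y ∧ τ y < τ x).card := by
  rw [kendall_one]
  rw [Finset.card_filter]
  rw [Fintype.sum_prod_type]
  exact Finset.sum_congr rfl fun x _ => (Finset.card_filter _ _).symm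

lemma kendall_cols {V : ℕ} (τ : Equiv.Perm (Fin V)) :
    kendall τ 1 = ∑ x : Fin V, (univ.filter fun y => y < x ∧ τ x < τ y).card := by
  rw [kendall_one, Finset.card_filter, Fintype.sum_prod_type, Finset.sum_comm]
  exact Finset.sum_congr rfl fun x _ => (Finset.card_filter _ _).symm

lemma footrule_le_two_kendall_one {V : ℕ} (τ : Equiv.Perm (Fin V)) :
    footrule τ 1 ≤ 2 * kendall τ 1 := by
  have key : ∀ x : Fin V, (((τ x : ℕ) : ℤ) - (((1 : Perm (Fin V)) x : ℕ) : ℤ)).natAbs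
      ≤ (univ.filter fun y => x < y ∧ τ y < τ x).card
        + (univ.filter fun y => y < x ∧ τ x < τ y).card := by
    intro x
    set A := univ.filter fun y => τ y < τ x with hA
    set B := univ.filter fun y : Fin V => y < x with hB
    have hAx : ((τ x : ℕ) : ℤ) = A.card := by rw [val_eq_card τ x]
    have hBx : (((1 : Perm (Fin V)) x : ℕ) : ℤ) = B.card := by
      simp [hB, Perm.one_apply, card_filter_lt_fin]
    have hAB : A \ B = univ.filter fun y => x < y ∧ τ y < τ x := by
      ext y
      simp only [hA, hB, mem_sdiff, mem_filter, mem_univ, true_and, not_lt]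
      constructor
      · rintro ⟨h1, h2⟩
        have : y ≠ x := fun h => by subst h; exact absurd h1 (lt_irrefl _)
        exact ⟨lt_of_le_of_ne h2 (Ne.symm this), h1⟩
      · rintro ⟨h1, h2⟩; exact ⟨h2, h1.le⟩
    have hBA : B \ A = univ.filter fun y => y < x ∧ τ x < τ y := by
      ext y
      simp only [hA, hB, mem_sdiff, mem_filter, mem_univ, true_and, not_lt]
      constructor
      · rintro ⟨h1, h2⟩
        have : τ y ≠ τ x := fun h => by
          have := τ.injective h; subst this; exact absurd h1 (lt_irrefl _)
        exact ⟨h1, lt_of_le_of_ne h2 (Ne.symm this)⟩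
      · rintro ⟨h1, h2⟩; exact ⟨h1, h2.le⟩
    have hab : (A.card : ℤ) - B.card = ((A \ B).card : ℤ) - (B \ A).card := by
      have h1 : (A ∩ B).card + (A \ B).card = A.card := Finset.card_inter_add_card_sdiff A B
      have h2 : (B ∩ A).card + (B \ A).card = B.card := Finset.card_inter_add_card_sdiff B A
      have h3 : A ∩ B = B ∩ A := Finset.inter_comm A B
      rw [h3] at h1
      omega
    rw [hAx, hBx, hab, ← hAB, ← hBA]
    calc (((A \ B).card : ℤ) - ((B \ A).card : ℤ)).natAbs
        ≤ ((A \ B).card : ℤ).natAbs + ((B \ A).card : ℤ).natAbs := Int.natAbs_sub_le _ _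
      _ = (A \ B).card + (B \ A).card := by simp
  calc footrule τ 1 ≤ ∑ x : Fin V, ((univ.filter fun y => x < y ∧ τ y < τ x).card
        + (univ.filter fun y => y < x ∧ τ x < τ y).card) := Finset.sum_le_sum fun x _ => key x
    _ = kendall τ 1 + kendall τ 1 := by
        rw [Finset.sum_add_distrib, ← kendall_rows, ← kendall_cols]
    _ = 2 * kendall τ 1 := (two_mul _).symm

-- splitting a sum at two points
lemma sum_split_two {V : ℕ} {M : Type*} [AddCommMonoid M] {i j : Fin V} (h : i ≠ j)
    (g : Fin V → M) :
    ∑ x : Fin V, g x = g i + g j + ∑ x ∈ univ \ {i, j}, g x := by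
  have hsub : ({i, j} : Finset (Fin V)) ⊆ univ := subset_univ _
  rw [← Finset.sum_sdiff hsub, Finset.sum_pair h]
  exact (add_comm _ _)


lemma kendall_int {V : ℕ} (τ : Equiv.Perm (Fin V)) :
    (kendall τ 1 : ℤ) = ∑ x : Fin V, ∑ y : Fin V,
      (if x < y ∧ τ y < τ x then (1 : ℤ) else 0) := by
  rw [kendall_one, Finset.card_filter, Fintype.sum_prod_type]
  push_cast
  rfl

lemma footrule_int {V : ℕ} (τ : Equiv.Perm (Fin V)) :
    (footrule τ 1 : ℤ) = ∑ x : Fin V, |((τ x : ℕ) : ℤ) - ((x : ℕ) : ℤ)| := by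
  unfold footrule
  push_cast [Nat.cast_natAbs]
  simp [Perm.one_apply]

section step
variable {V : ℕ} (τ : Equiv.Perm (Fin V)) (i j : Fin V)

lemma step_kendall (hij : i < j) (hj : τ j = i) (ha : i < τ i)
    (hgt : ∀ y, i < y → y ≠ j → i < τ y) (hfix : ∀ k, k < i → τ k = k) :
    (kendall τ 1 : ℤ) = kendall (τ * Equiv.swap i j) 1 + 1
      + 2 * ((univ.filter fun k => i < k ∧ k < j ∧ τ k < τ i).card : ℤ) := by
  set τ' := τ * Equiv.swap i j with hτ'
  have hne : i ≠ j := hij.ne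
  have hτ'i : τ' i = i := by simp [hτ', Perm.mul_apply, Equiv.swap_apply_left, hj]
  have hτ'j : τ' j = τ i := by simp [hτ', Perm.mul_apply, Equiv.swap_apply_right]
  have hτ'x : ∀ x, x ≠ i → x ≠ j → τ' x = τ x := fun x h1 h2 => by
    simp [hτ', Perm.mul_apply, Equiv.swap_apply_of_ne_of_ne h1 h2]
  -- value facts (ℕ)
  have hij' : (i : ℕ) < j := hij
  have ha' : (i : ℕ) < τ i := ha
  have hji' : ((τ j : Fin V) : ℕ) = i := by rw [hj]
  -- τ' never sends y > i below i
  have hgt' : ∀ y : Fin V, i < y → (i : ℕ) < ((τ' y : Fin V) : ℕ) := by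
    intro y hy
    rcases eq_or_ne y j with rfl | hyj
    · rw [hτ'j]; exact ha'
    · rw [hτ'x y (ne_of_gt hy) hyj]; exact hgt y hy hyj
  have hgtτ : ∀ y : Fin V, i < y → y ≠ j → (i : ℕ) < ((τ y : Fin V) : ℕ) :=
    fun y h1 h2 => hgt y h1 h2
  -- small-position fixed (val version)
  have hfix' : ∀ k : Fin V, k < i → ((τ k : Fin V) : ℕ) = (k : ℕ) := fun k hk => by
    rw [hfix k hk]
  rw [kendall_int, kendall_int]
  -- row decomposition
  rw [sum_split_two hne (fun x => ∑ y : Fin V, (if x < y ∧ τ y < τ x then (1:ℤ) else 0))]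
  rw [sum_split_two hne (fun x => ∑ y : Fin V, (if x < y ∧ τ' y < τ' x then (1:ℤ) else 0))]
  -- Row i for τ' is 0
  have rowi' : ∑ y : Fin V, (if i < y ∧ τ' y < τ' i then (1:ℤ) else 0) = 0 := by
    apply Finset.sum_eq_zero
    intro y _
    rw [if_neg]
    rintro ⟨h1, h2⟩
    rw [hτ'i] at h2
    exact absurd (hgt' y h1) (not_lt.mpr (le_of_lt h2))
  -- Row j for τ is 0
  have rowj : ∑ y : Fin V, (if j < y ∧ τ y < τ j then (1:ℤ) else 0) = 0 := by
    apply Finset.sum_eq_zero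
    intro y _
    rw [if_neg]
    rintro ⟨h1, h2⟩
    rw [hj] at h2
    have : i < y := lt_trans hij h1
    exact absurd (hgtτ y this (ne_of_gt h1)) (not_lt.mpr (le_of_lt h2))
  -- T equals the card
  have hTcard : (∑ y : Fin V, if i < y ∧ y < j ∧ τ y < τ i then (1:ℤ) else 0)
      = ((univ.filter fun k => i < k ∧ k < j ∧ τ k < τ i).card : ℤ) := by
    rw [Finset.card_filter]
    push_cast
    rfl
  -- Row j for τ' equals ∑ e2
  have rowj' : ∑ y : Fin V, (if j < y ∧ τ' y < τ' j then (1:ℤ) else 0)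
      = ∑ y : Fin V, (if j < y ∧ τ y < τ i then (1:ℤ) else 0) := by
    refine Finset.sum_congr rfl fun y _ => ?_
    by_cases hy : j < y
    · have hyi : y ≠ i := ne_of_gt (lt_trans hij hy)
      have hyj : y ≠ j := ne_of_gt hy
      rw [hτ'x y hyi hyj, hτ'j]
    · rw [if_neg (fun h => hy h.1), if_neg (fun h => hy h.1)]
  -- e1 = e2 + e4 pointwise, so row i of τ splits
  have rowi : ∑ y : Fin V, (if i < y ∧ τ y < τ i then (1:ℤ) else 0)
      = (∑ y : Fin V, if j < y ∧ τ y < τ i then (1:ℤ) else 0)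
        + ∑ y : Fin V, (if i < y ∧ y ≤ j ∧ τ y < τ i then (1:ℤ) else 0) := by
    rw [← Finset.sum_add_distrib]
    refine Finset.sum_congr rfl fun y _ => ?_
    simp only [Fin.lt_def, Fin.le_def]
    split_ifs <;> omega
  -- ∑ e4 = 1 + T
  have hE4 : ∑ y : Fin V, (if i < y ∧ y ≤ j ∧ τ y < τ i then (1:ℤ) else 0)
      = 1 + ∑ y : Fin V, (if i < y ∧ y < j ∧ τ y < τ i then (1:ℤ) else 0) := by
    rw [← Finset.add_sum_erase univ _ (mem_univ j),
        ← Finset.add_sum_erase univ (fun y => if i < y ∧ y < j ∧ τ y < τ i then (1:ℤ) else 0)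
          (mem_univ j)]
    have h1 : (if i < j ∧ j ≤ j ∧ τ j < τ i then (1:ℤ) else 0) = 1 :=
      if_pos ⟨hij, le_refl j, by rw [hj]; exact ha⟩
    have h3 : (if i < j ∧ j < j ∧ τ j < τ i then (1:ℤ) else 0) = 0 :=
      if_neg (fun h => absurd h.2.1 (lt_irrefl j))
    rw [h1, h3, zero_add]
    congr 1
    refine Finset.sum_congr rfl fun y hy => ?_
    have hyj : (y : ℕ) ≠ (j : ℕ) := by
      simpa [Fin.val_eq_val] using (Finset.mem_erase.mp hy).1
    simp only [Fin.lt_def, Fin.le_def]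
    split_ifs <;> omega
  -- per-row identity for x ∉ {i, j}
  have hdiff : ∑ x ∈ univ \ {i, j}, (∑ y : Fin V, (if x < y ∧ τ y < τ x then (1:ℤ) else 0))
      = (∑ x ∈ univ \ {i, j}, ∑ y : Fin V, (if x < y ∧ τ' y < τ' x then (1:ℤ) else 0))
        + ∑ y : Fin V, (if i < y ∧ y < j ∧ τ y < τ i then (1:ℤ) else 0) := by
    have key : ∀ x ∈ univ \ ({i, j} : Finset (Fin V)),
        (∑ y : Fin V, (if x < y ∧ τ y < τ x then (1:ℤ) else 0))
          = (∑ y : Fin V, (if x < y ∧ τ' y < τ' x then (1:ℤ) else 0))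
            + (if i < x ∧ x < j ∧ τ x < τ i then (1:ℤ) else 0) := by
      intro x hx
      simp only [mem_sdiff, mem_univ, true_and, mem_insert, mem_singleton, not_or] at hx
      obtain ⟨hxi, hxj⟩ := hx
      have hτ'xx : τ' x = τ x := hτ'x x hxi hxj
      rw [sum_split_two hne (fun y => if x < y ∧ τ y < τ x then (1:ℤ) else 0)]
      rw [sum_split_two hne (fun y => if x < y ∧ τ' y < τ' x then (1:ℤ) else 0)]
      have hrest : ∑ y ∈ univ \ {i, j}, (if x < y ∧ τ y < τ x then (1:ℤ) else 0)
          = ∑ y ∈ univ \ {i, j}, (if x < y ∧ τ' y < τ' x then (1:ℤ) else 0) := by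
        refine Finset.sum_congr rfl fun y hy => ?_
        simp only [mem_sdiff, mem_univ, true_and, mem_insert, mem_singleton, not_or] at hy
        rw [hτ'x y hy.1 hy.2, hτ'xx]
      rw [hrest]
      have hxine : (x : ℕ) ≠ (i : ℕ) := by simpa [Fin.val_eq_val] using hxi
      rw [hτ'i, hτ'j, hτ'xx, hj]
      rcases lt_trichotomy x i with h | h | h
      · have hfx : ((τ x : Fin V) : ℕ) = (x : ℕ) := hfix' x h
        simp only [Fin.lt_def]
        split_ifs <;> omega
      · exact absurd h hxi
      · have hgx : (i : ℕ) < ((τ x : Fin V) : ℕ) := hgtτ x h hxj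
        have hτne : ((τ x : Fin V) : ℕ) ≠ ((τ i : Fin V) : ℕ) := fin_val_ne τ hxi
        simp only [Fin.lt_def]
        split_ifs <;> omega
    rw [Finset.sum_congr rfl key, Finset.sum_add_distrib]
    congr 1
    rw [sum_split_two hne (fun y => if i < y ∧ y < j ∧ τ y < τ i then (1:ℤ) else 0)]
    have h5i : (if i < i ∧ i < j ∧ τ i < τ i then (1:ℤ) else 0) = 0 :=
      if_neg (fun h => absurd h.1 (lt_irrefl i))
    have h5j : (if i < j ∧ j < j ∧ τ j < τ i then (1:ℤ) else 0) = 0 :=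
      if_neg (fun h => absurd h.2.1 (lt_irrefl j))
    rw [h5i, h5j, zero_add, zero_add]
  rw [rowj, rowi, rowi', rowj', hdiff, hE4, hTcard]
  ring

lemma step_footrule (hij : i < j) (hj : τ j = i) (ha : i < τ i) :
    (footrule τ 1 : ℤ) = footrule (τ * Equiv.swap i j) 1
      + 2 * (min ((τ i : Fin V) : ℕ) ((j : Fin V) : ℕ) - (i : ℕ) : ℤ) := by
  set τ' := τ * Equiv.swap i j with hτ'
  have hne : i ≠ j := hij.ne
  have hτ'i : τ' i = i := by simp [hτ', Equiv.Perm.mul_apply, Equiv.swap_apply_left, hj]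
  have hτ'j : τ' j = τ i := by simp [hτ', Equiv.Perm.mul_apply, Equiv.swap_apply_right]
  have hτ'x : ∀ x, x ≠ i → x ≠ j → τ' x = τ x := fun x h1 h2 => by
    simp [hτ', Equiv.Perm.mul_apply, Equiv.swap_apply_of_ne_of_ne h1 h2]
  rw [footrule_int, footrule_int]
  rw [sum_split_two hne (fun x => |((τ x : ℕ) : ℤ) - ((x : ℕ) : ℤ)|)]
  rw [sum_split_two hne (fun x => |((τ' x : ℕ) : ℤ) - ((x : ℕ) : ℤ)|)]
  have hrest : ∑ x ∈ univ \ {i, j}, |((τ x : ℕ) : ℤ) - ((x : ℕ) : ℤ)|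
      = ∑ x ∈ univ \ {i, j}, |((τ' x : ℕ) : ℤ) - ((x : ℕ) : ℤ)| := by
    refine Finset.sum_congr rfl fun x hx => ?_
    simp only [mem_sdiff, mem_univ, true_and, mem_insert, mem_singleton, not_or] at hx
    rw [hτ'x x hx.1 hx.2]
  rw [hrest, hτ'i, hτ'j, hj]
  have hij' : ((i : ℕ) : ℤ) < ((j : ℕ) : ℤ) := by exact_mod_cast hij
  have ha' : ((i : ℕ) : ℤ) < (((τ i : Fin V) : ℕ) : ℤ) := by exact_mod_cast ha
  have hA1 : |(((τ i : Fin V) : ℕ) : ℤ) - ((i : ℕ) : ℤ)| = (((τ i : Fin V) : ℕ) : ℤ) - ((i : ℕ) : ℤ) :=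
    abs_of_nonneg (by linarith)
  have hA2 : |((i : ℕ) : ℤ) - ((j : ℕ) : ℤ)| = ((j : ℕ) : ℤ) - ((i : ℕ) : ℤ) := by
    rw [abs_of_nonpos (by linarith)]; ring
  have hA3 : |((i : ℕ) : ℤ) - ((i : ℕ) : ℤ)| = 0 := by simp
  rw [hA1, hA2, hA3]
  rcases le_total (((τ i : Fin V) : ℕ) : ℤ) (((j : ℕ) : ℕ) : ℤ) with h | h
  · have hA4 : |(((τ i : Fin V) : ℕ) : ℤ) - ((j : ℕ) : ℤ)| = ((j : ℕ) : ℤ) - (((τ i : Fin V) : ℕ) : ℤ) := by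
      rw [abs_of_nonpos (by linarith)]; ring
    rw [hA4, min_eq_left (by exact_mod_cast h)]
    ring
  · have hA4 : |(((τ i : Fin V) : ℕ) : ℤ) - ((j : ℕ) : ℤ)| = (((τ i : Fin V) : ℕ) : ℤ) - ((j : ℕ) : ℤ) :=
      abs_of_nonneg (by linarith)
    rw [hA4, min_eq_right (by exact_mod_cast h)]
    ring

lemma t_bound (hij : i < j) (hj : τ j = i) (ha : i < τ i)
    (hgt : ∀ y, i < y → y ≠ j → i < τ y) :
    (univ.filter fun k => i < k ∧ k < j ∧ τ k < τ i).card + (i : ℕ) + 1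
      ≤ min ((τ i : Fin V) : ℕ) ((j : Fin V) : ℕ) := by
  rcases le_total ((τ i : Fin V) : ℕ) ((j : Fin V) : ℕ) with h | h
  · rw [min_eq_left h]
    -- inject via τ into Ioo i (τ i)
    have hcard : (univ.filter fun k => i < k ∧ k < j ∧ τ k < τ i).card
        ≤ (Finset.Ioo i (τ i)).card := by
      apply Finset.card_le_card_of_injOn (fun k => τ k)
      · intro k hk
        simp only [mem_coe, mem_filter, mem_univ, true_and] at hk
        rw [Finset.mem_coe, Finset.mem_Ioo]
        exact ⟨hgt k hk.1 (ne_of_lt hk.2.1), hk.2.2⟩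
      · intro a _ b _ hab
        exact τ.injective hab
    rw [Fin.card_Ioo] at hcard
    omega
  · rw [min_eq_right h]
    have hcard : (univ.filter fun k => i < k ∧ k < j ∧ τ k < τ i).card
        ≤ (Finset.Ioo i j).card := by
      apply Finset.card_le_card
      intro k hk
      simp only [mem_filter, mem_univ, true_and] at hk
      rw [Finset.mem_Ioo]
      exact ⟨hk.1, hk.2.1⟩
    rw [Fin.card_Ioo] at hcard
    omega
end step
lemma kendall_le_footrule_aux {V : ℕ} :
    ∀ n (τ : Equiv.Perm (Fin V)), footrule τ 1 = n → kendall τ 1 ≤ footrule τ 1 := by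
  intro n
  induction n using Nat.strong_induction_on with
  | _ n ih =>
    intro τ hn
    by_cases h1 : τ = 1
    · subst h1
      simp [kendall]
    · have hex : ∃ x, τ x ≠ x := by
        by_contra hno
        push_neg at hno
        exact h1 (Equiv.ext fun x => hno x)
      obtain ⟨x0, hx0⟩ := hex
      set s := univ.filter (fun x => τ x ≠ x) with hs'
      have hs : s.Nonempty := ⟨x0, by simp [hs', hx0]⟩
      set i := s.min' hs with hi'
      have hi : τ i ≠ i := (mem_filter.mp (s.min'_mem hs)).2
      have hfix : ∀ k, k < i → τ k = k := by
        intro k hk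
        by_contra hkk
        exact absurd (s.min'_le k (by simp [hs', hkk])) (not_le.mpr hk)
      have ha : i < τ i := by
        rcases hi.lt_or_gt with h | h
        · exact absurd (τ.injective (hfix (τ i) h)) hi
        · exact h
      set j := τ⁻¹ i with hj'
      have hj : τ j = i := τ.apply_inv_self i
      have hij : i < j := by
        have hji : j ≠ i := fun h => hi (h ▸ hj)
        rcases hji.lt_or_gt with h | h
        · exact absurd (by rw [← hj, hfix j h]) hji
        · exact h
      have hgt : ∀ y, i < y → y ≠ j → i < τ y := by
        intro y h1y h2y
        have hne : τ y ≠ i := fun h => h2y (τ.injective (by rw [h, hj]))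
        rcases lt_trichotomy (τ y) i with h | h | h
        · exfalso
          have h2 := τ.injective (hfix (τ y) h)
          rw [h2] at h
          exact absurd h1y (not_lt.mpr h.le)
        · exact absurd h hne
        · exact h
      have hK := step_kendall τ i j hij hj ha hgt hfix
      have hF := step_footrule τ i j hij hj ha
      have hT := t_bound τ i j hij hj ha hgt
      have ha' : (i : ℕ) < ((τ i : Fin V) : ℕ) := ha
      have hij' : (i : ℕ) < (j : ℕ) := hij
      have hlt : footrule (τ * Equiv.swap i j) 1 < n := by
        rw [← hn]
        omega
      have ihr := ih _ hlt (τ * Equiv.swap i j) rfl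
      omega

lemma kendall_le_footrule_one {V : ℕ} (τ : Equiv.Perm (Fin V)) :
    kendall τ 1 ≤ footrule τ 1 :=
  kendall_le_footrule_aux (footrule τ 1) τ rfl


theorem footrule_kendall_equiv {V : ℕ} (π σ : Equiv.Perm (Fin V)) :
    kendall π σ ≤ footrule π σ ∧ footrule π σ ≤ 2 * kendall π σ := by
  constructor
  · rw [kendall_reduce π σ, footrule_reduce π σ]
    exact kendall_le_footrule_one _
  · rw [kendall_reduce π σ, footrule_reduce π σ]
    exact footrule_le_two_kendall_one _
end

section
/- Let ε ∈ ℝ^d have i.i.d. coordinates ε_i ~ N(0, σ²), and let x ∈ ℝ^d have distinct coordinates with minimum gap δ_min. Then the probability that argsort(x+ε) ≠ argsort(x) is at most C(d,2) · exp(−δ_min² / (4σ²)). -/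
set_option maxHeartbeats 1000000

open MeasureTheory ProbabilityTheory
open scoped NNReal ENNReal

lemma pdf_mul_exp {v : ℝ≥0} (hv : v ≠ 0) (c y : ℝ) :
    gaussianPDFReal 0 v y * Real.exp (c * y)
      = Real.exp (c ^ 2 * v / 2) * gaussianPDFReal (c * v) v y := by
  have hv' : (0:ℝ) < v := lt_of_le_of_ne v.coe_nonneg (by exact_mod_cast hv.symm)
  have h : -y^2/(2*(v:ℝ)) + c*y = c^2*(v:ℝ)/2 + (-(y - c*(v:ℝ))^2/(2*(v:ℝ))) := by
    field_simp
    ring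
  unfold gaussianPDFReal
  rw [sub_zero, mul_assoc, ← Real.exp_add, h, Real.exp_add]
  ring

lemma integral_exp_gaussianReal {v : ℝ≥0} (hv : v ≠ 0) (c : ℝ) :
    ∫ y, Real.exp (c * y) ∂(gaussianReal 0 v) = Real.exp (c ^ 2 * v / 2) := by
  rw [gaussianReal_of_var_ne_zero 0 hv]
  have hped : (gaussianPDF 0 v) = fun y => (((fun y => (gaussianPDFReal 0 v y).toNNReal) y : ℝ≥0) : ℝ≥0∞) := rfl
  rw [hped, integral_withDensity_eq_integral_smul ((measurable_gaussianPDFReal 0 v).real_toNNReal)]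
  simp_rw [NNReal.smul_def, smul_eq_mul, Real.coe_toNNReal _ (gaussianPDFReal_nonneg 0 v _),
    pdf_mul_exp hv c]
  rw [integral_const_mul, integral_gaussianPDFReal_eq_one (c*v) hv, mul_one]

lemma integrable_exp_gaussianReal {v : ℝ≥0} (hv : v ≠ 0) (c : ℝ) :
    Integrable (fun y => Real.exp (c * y)) (gaussianReal 0 v) := by
  rw [gaussianReal_of_var_ne_zero 0 hv]
  have hped : (gaussianPDF 0 v) = fun y => (((fun y => (gaussianPDFReal 0 v y).toNNReal) y : ℝ≥0) : ℝ≥0∞) := rfl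
  rw [hped, integrable_withDensity_iff_integrable_coe_smul₀
    ((measurable_gaussianPDFReal 0 v).real_toNNReal.aemeasurable)]
  refine ((integrable_gaussianPDFReal (c*↑v) v).const_mul (Real.exp (c^2*v/2))).congr
    (Filter.Eventually.of_forall fun y => ?_)
  dsimp only
  rw [smul_eq_mul, Real.coe_toNNReal _ (gaussianPDFReal_nonneg 0 v y), ← pdf_mul_exp hv]

lemma mgf_gaussian' {Ω : Type*} [MeasurableSpace Ω] {P : Measure Ω} {X : Ω → ℝ}
    (hX : Measurable X) {v : ℝ≥0} (hv : v ≠ 0)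
    (hg : Measure.map X P = gaussianReal 0 v) (c : ℝ) :
    mgf X P c = Real.exp (c ^ 2 * v / 2) := by
  rw [mgf, ← integral_exp_gaussianReal hv c, ← hg,
    integral_map hX.aemeasurable ((measurable_id'.const_mul c).exp).aestronglyMeasurable]

lemma integrable_exp_gaussian' {Ω : Type*} [MeasurableSpace Ω] {P : Measure Ω} {X : Ω → ℝ}
    (hX : Measurable X) {v : ℝ≥0} (hv : v ≠ 0)
    (hg : Measure.map X P = gaussianReal 0 v) (c : ℝ) :
    Integrable (fun ω => Real.exp (c * X ω)) P := by
  have h := integrable_exp_gaussianReal hv c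
  rw [← hg] at h
  exact (integrable_map_measure ((measurable_id'.const_mul c).exp).aestronglyMeasurable hX.aemeasurable).mp h

lemma pair_tail_bound {Ω : Type*} [MeasurableSpace Ω] (P : Measure Ω) [IsProbabilityMeasure P]
    {σ : ℝ} (hσ : 0 < σ) {X Y : Ω → ℝ} (hXm : Measurable X) (hYm : Measurable Y)
    (hind : ProbabilityTheory.IndepFun X Y P)
    (hgX : Measure.map X P = gaussianReal 0 ⟨σ ^ 2, by positivity⟩)
    (hgY : Measure.map Y P = gaussianReal 0 ⟨σ ^ 2, by positivity⟩)
    {t : ℝ} (ht : 0 ≤ t) :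
    (P {ω | t ≤ Y ω - X ω}).toReal ≤ Real.exp (-(t ^ 2) / (4 * σ ^ 2)) := by
  set v : ℝ≥0 := ⟨σ ^ 2, by positivity⟩ with hvdef
  have hv : v ≠ 0 := by
    intro h
    have : (v : ℝ) = 0 := by rw [h]; simp
    simp only [hvdef, NNReal.coe_mk] at this
    change σ ^ 2 = 0 at this
    nlinarith
  set Z : Ω → ℝ := fun ω => -X ω with hZdef
  have hZm : Measurable Z := hXm.neg
  have hgZ : Measure.map Z P = gaussianReal 0 v := by
    have hZ' : Z = (fun y : ℝ => -1 * y) ∘ X := by funext ω; simp [hZdef]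
    have h2 : (⟨(-1:ℝ) ^ 2, sq_nonneg _⟩ : ℝ≥0) = 1 := by ext; norm_num
    rw [hZ', ← Measure.map_map (measurable_id'.const_mul (-1)) hXm, hgX,
      gaussianReal_map_const_mul (-1), mul_zero]
    congr 1
    ext
    simp
  have hindYZ : ProbabilityTheory.IndepFun Y Z P :=
    hind.symm.comp measurable_id measurable_neg
  set c : ℝ := t / (2 * σ ^ 2) with hcdef
  have hc : 0 ≤ c := by positivity
  have hintY : Integrable (fun ω => Real.exp (c * Y ω)) P :=
    integrable_exp_gaussian' hYm hv hgY c
  have hintZ : Integrable (fun ω => Real.exp (c * Z ω)) P :=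
    integrable_exp_gaussian' hZm hv hgZ c
  have hint : Integrable (fun ω => Real.exp (c * (Y + Z) ω)) P :=
    hindYZ.integrable_exp_mul_add hintY hintZ
  have hset : {ω | t ≤ Y ω - X ω} = {ω | t ≤ (Y + Z) ω} := by
    ext ω; simp [hZdef, sub_eq_add_neg]
  have hmgf : mgf (Y + Z) P c = Real.exp (c ^ 2 * v / 2) * Real.exp (c ^ 2 * v / 2) := by
    rw [hindYZ.mgf_add' hYm.aestronglyMeasurable hZm.aestronglyMeasurable,
      mgf_gaussian' hYm hv hgY, mgf_gaussian' hZm hv hgZ]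
  have hch := measure_ge_le_exp_mul_mgf (X := Y + Z) (μ := P) t hc hint
  rw [hset]
  refine hch.trans (le_of_eq ?_)
  rw [hmgf, ← Real.exp_add, ← Real.exp_add]
  congr 1
  have hvr : (v : ℝ) = σ ^ 2 := rfl
  rw [hvr, hcdef]
  field_simp
  ring


/-- `π` sorts `y` in strictly descending order. -/
def SortsDesc {d : ℕ} (π : Equiv.Perm (Fin d)) (y : Fin d → ℝ) : Prop :=
  ∀ k l : Fin d, k < l → y (π l) < y (π k)

/-- Minimum gap between distinct coordinates of `x`. -/
noncomputable def deltaMin {d : ℕ} (x : Fin d → ℝ) : ℝ :=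
  sInf {r : ℝ | ∃ i j : Fin d, i ≠ j ∧ r = |x i - x j|}

/-- Gaussian stability bound: the probability that Gaussian noise changes the
argsort of `x` is at most `C(d,2) · exp(−δ_min² / (4σ²))`. -/
theorem argsort_gaussian_stability {Ω : Type*} [MeasurableSpace Ω]
    (P : Measure Ω) [IsProbabilityMeasure P]
    {d : ℕ} (x : Fin d → ℝ) (hx : ∀ i j : Fin d, i ≠ j → x i ≠ x j)
    (σ : ℝ) (hσ : 0 < σ) (ε : Fin d → Ω → ℝ)
    (hmeas : ∀ i, Measurable (ε i))
    (hindep : iIndepFun ε P)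
    (hgauss : ∀ i, Measure.map (ε i) P = gaussianReal 0 ⟨σ ^ 2, by positivity⟩) :
    P {ω | ¬ ∀ π : Equiv.Perm (Fin d),
        SortsDesc π x ↔ SortsDesc π (fun i => x i + ε i ω)} ≤
      ENNReal.ofReal ((d.choose 2 : ℝ) *
        Real.exp (-(deltaMin x ^ 2) / (4 * σ ^ 2))) := by
  classical
  set E : ℝ := Real.exp (-(deltaMin x ^ 2) / (4 * σ ^ 2)) with hEdef
  set S : Finset (Fin d × Fin d) := Finset.univ.filter (fun p => x p.2 < x p.1) with hSdef
  set B : (Fin d × Fin d) → Set Ω :=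
    fun p => {ω | x p.1 + ε p.1 ω ≤ x p.2 + ε p.2 ω} with hBdef
  -- Step 1: inclusion
  have hsub : {ω | ¬ ∀ π : Equiv.Perm (Fin d),
      SortsDesc π x ↔ SortsDesc π (fun i => x i + ε i ω)} ⊆ ⋃ p ∈ S, B p := by
    intro ω hω
    by_contra hnot
    refine hω ?_
    have hc : ∀ i j : Fin d, x j < x i → x j + ε j ω < x i + ε i ω := by
      intro i j hij
      by_contra hle
      exact hnot (Set.mem_iUnion₂.mpr ⟨(i, j),
        Finset.mem_filter.mpr ⟨Finset.mem_univ _, hij⟩, not_lt.mp hle⟩)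
    intro π
    constructor
    · intro h k l hkl
      exact hc _ _ (h k l hkl)
    · intro h k l hkl
      have hne : π k ≠ π l := fun he => absurd (π.injective he) hkl.ne
      rcases (hx _ _ hne).lt_or_gt with h1 | h1
      · have h2 := hc (π l) (π k) h1
        have h3 := h k l hkl
        simp only at h3
        linarith
      · exact h1
  -- Step 2: per-pair bound
  have hpb : ∀ p ∈ S, P (B p) ≤ ENNReal.ofReal E := by
    intro p hp
    have hlt : x p.2 < x p.1 := (Finset.mem_filter.mp hp).2
    have hne : p.1 ≠ p.2 := fun h => absurd hlt (by rw [h]; exact lt_irrefl _)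
    set t : ℝ := x p.1 - x p.2 with htdef
    have ht0 : 0 < t := sub_pos.mpr hlt
    have hBset : B p = {ω | t ≤ ε p.2 ω - ε p.1 ω} := by
      ext ω
      simp only [hBdef, Set.mem_setOf_eq, htdef]
      constructor <;> intro <;> linarith
    have hbd1 : (P (B p)).toReal ≤ Real.exp (-(t ^ 2) / (4 * σ ^ 2)) := by
      rw [hBset]
      exact pair_tail_bound P hσ (hmeas p.1) (hmeas p.2) (hindep.indepFun hne)
        (hgauss p.1) (hgauss p.2) ht0.le
    -- deltaMin ≤ t
    have hmem : t ∈ {r : ℝ | ∃ i j : Fin d, i ≠ j ∧ r = |x i - x j|} :=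
      ⟨p.1, p.2, hne, (abs_of_pos ht0).symm⟩
    have hlb : ∀ r ∈ {r : ℝ | ∃ i j : Fin d, i ≠ j ∧ r = |x i - x j|}, (0:ℝ) ≤ r := by
      rintro r ⟨i, j, -, rfl⟩
      exact abs_nonneg _
    have hδt : deltaMin x ≤ t := csInf_le ⟨0, fun r hr => hlb r hr⟩ hmem
    have hδ0 : 0 ≤ deltaMin x := le_csInf ⟨t, hmem⟩ hlb
    have hexp : Real.exp (-(t ^ 2) / (4 * σ ^ 2)) ≤ E := by
      rw [hEdef, Real.exp_le_exp]
      have h2 : deltaMin x ^ 2 ≤ t ^ 2 := pow_le_pow_left₀ hδ0 hδt 2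
      apply div_le_div_of_nonneg_right (neg_le_neg h2)
      positivity
    calc P (B p) = ENNReal.ofReal ((P (B p)).toReal) :=
          (ENNReal.ofReal_toReal (measure_ne_top P _)).symm
      _ ≤ ENNReal.ofReal E := ENNReal.ofReal_le_ofReal (hbd1.trans hexp)
  -- Step 3: cardinality bound
  have hcard : S.card ≤ d.choose 2 := by
    have h1 : ∀ p ∈ S, (Sym2.mk (α := Fin d)).uncurry p ∈ Finset.univ.offDiag.image (Sym2.mk (α := Fin d)).uncurry := by
      intro p hp
      have hlt := (Finset.mem_filter.mp hp).2
      have hne : p.1 ≠ p.2 := fun h => absurd hlt (by rw [h]; exact lt_irrefl _)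
      exact Finset.mem_image_of_mem _
        (Finset.mem_offDiag.mpr ⟨Finset.mem_univ _, Finset.mem_univ _, hne⟩)
    have h2 : Set.InjOn (Sym2.mk (α := Fin d)).uncurry (S : Set (Fin d × Fin d)) := by
      rintro ⟨a, b⟩ hp ⟨c, e⟩ hq hpq
      have hp' : x b < x a := by
        have := Finset.mem_filter.mp hp; exact this.2
      have hq' : x e < x c := by
        have := Finset.mem_filter.mp hq; exact this.2
      rcases Sym2.eq_iff.mp hpq with ⟨rfl, rfl⟩ | ⟨rfl, rfl⟩
      · rfl
      · exact absurd hp' (not_lt.mpr hq'.le)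
    calc S.card ≤ (Finset.univ.offDiag.image (Sym2.mk (α := Fin d)).uncurry).card :=
          Finset.card_le_card_of_injOn _ h1 h2
      _ = (Finset.univ : Finset (Fin d)).card.choose 2 := Sym2.card_image_offDiag _
      _ = d.choose 2 := by rw [Finset.card_univ, Fintype.card_fin]
  -- Step 4: assemble
  have hE0 : 0 ≤ E := le_of_lt (Real.exp_pos _)
  calc P {ω | ¬ ∀ π : Equiv.Perm (Fin d),
        SortsDesc π x ↔ SortsDesc π (fun i => x i + ε i ω)}
      ≤ P (⋃ p ∈ S, B p) := measure_mono hsub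
    _ ≤ ∑ p ∈ S, P (B p) := measure_biUnion_finset_le S B
    _ ≤ ∑ _p ∈ S, ENNReal.ofReal E := Finset.sum_le_sum hpb
    _ = (S.card : ℝ≥0∞) * ENNReal.ofReal E := by
        rw [Finset.sum_const, nsmul_eq_mul]
    _ ≤ (d.choose 2 : ℝ≥0∞) * ENNReal.ofReal E := by
        exact mul_le_mul_left (by exact_mod_cast hcard) _
    _ = ENNReal.ofReal ((d.choose 2 : ℝ) * E) := by
        rw [ENNReal.ofReal_mul (by positivity), ENNReal.ofReal_natCast]
end
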